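/- Let f ∈ L²([0,1]^d) with ANOVA decomposition f = Σ_{u ⊆ 𝒟} f_u, where f_u depends only on coordinates in u, ∫₀¹ f_u dx_j = 0 for each j ∈ u, and f_∅ ≡ μ. For x, z independent uniform on [0,1]^d and u, v ⊆ 𝒟, let y_u denote the hybrid point with coordinates x_j for j ∈ u and z_j for j ∉ u. Then E[f(y_u) f(y_v)] = μ² + Σ_{w ⊆ nxor(u,v)} ∫ f_w² , i.e. Θ_{uv} = μ² + τ̲²_{nxor(u,v)}. -/

import Mathlib

open MeasureTheory
open scoped ENNReal

/-- The uniform probability measure on the cube `[0,1]^d`. -/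
noncomputable def unifCube (d : ℕ) : Measure (Fin d → ℝ) :=
  Measure.pi fun _ => volume.restrict (Set.Icc (0 : ℝ) 1)

/-- `nxor(u,v) = (u ∩ v) ∪ (uᶜ ∩ vᶜ)`, complements within `𝒟` (modeled by `Fin d`). -/
def nxor {d : ℕ} (u v : Finset (Fin d)) : Finset (Fin d) := (u ∩ v) ∪ (uᶜ ∩ vᶜ)

/-- The hybrid point `y_u = x_u : z_{-u}`. -/
def glue {d : ℕ} (u : Finset (Fin d)) (x z : Fin d → ℝ) : Fin d → ℝ :=
  fun j => if j ∈ u then x j else z j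

namespace SobolAux

instance : IsProbabilityMeasure ((volume : Measure ℝ).restrict (Set.Icc (0 : ℝ) 1)) := by
  constructor
  simp [Real.volume_Icc]

instance (d : ℕ) : IsProbabilityMeasure (unifCube d) := by
  unfold unifCube; infer_instance

lemma integrable_mul_L2 {α : Type*} [MeasurableSpace α] {μ : Measure α} {g h : α → ℝ}
    (hg : MemLp g 2 μ) (hh : MemLp h 2 μ) :
    Integrable (fun x => g x * h x) μ := by
  have h1 : (1 : ℝ≥0∞) / 1 = 1 / 2 + 1 / 2 := by
    rw [ENNReal.div_add_div_same, one_div_one, one_add_one_eq_two,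
      ENNReal.div_self two_ne_zero ENNReal.ofNat_ne_top]
  have := hh.smul (r := 1) hg
  rw [← memLp_one_iff_integrable]
  exact this

/-- Vanishing lemma on the cube: if `g` integrates to zero along coordinate `j`
then its integral vanishes. -/
lemma integral_pi_eq_zero {d : ℕ} (g : (Fin d → ℝ) → ℝ) (hg : Integrable g (unifCube d))
    (j : Fin d) (h0 : ∀ x, ∫ t in Set.Icc (0 : ℝ) 1, g (Function.update x j t) = 0) :
    ∫ x, g x ∂(unifCube d) = 0 := by
  letI : Fintype {i : Fin d // i = j} := Subtype.fintype _
  have hmp := measurePreserving_piEquivPiSubtypeProd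
      (fun _ : Fin d => (volume.restrict (Set.Icc (0 : ℝ) 1))) (fun i : Fin d => i = j)
  have hmp' := hmp.symm _
  have key := hmp'.integral_comp
    (MeasurableEquiv.piEquivPiSubtypeProd (fun _ : Fin d => ℝ)
      (fun i : Fin d => i = j)).symm.measurableEmbedding g
  have hgi := (hmp'.integrable_comp hg.aestronglyMeasurable).mpr hg
  rw [show (∫ x, g x ∂(unifCube d)) = _ from key.symm, integral_prod_symm
    (fun q => g ((MeasurableEquiv.piEquivPiSubtypeProd (fun _ : Fin d => ℝ)
      (fun i : Fin d => i = j)).symm q)) hgi]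
  have hU := measurePreserving_funUnique
    (volume.restrict (Set.Icc (0 : ℝ) 1)) {i : Fin d // i = j}
  have hUe := hU.symm _
  have hinner : ∀ b, ∫ a, g ((MeasurableEquiv.piEquivPiSubtypeProd (fun _ : Fin d => ℝ)
      (fun i : Fin d => i = j)).symm (a, b))
      ∂(Measure.pi fun _ : {i : Fin d // i = j} =>
        volume.restrict (Set.Icc (0 : ℝ) 1)) = 0 := by
    intro b
    have h2 := hUe.integral_comp
      (MeasurableEquiv.funUnique {i : Fin d // i = j} ℝ).symm.measurableEmbedding
      (fun a => g ((MeasurableEquiv.piEquivPiSubtypeProd (fun _ : Fin d => ℝ)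
        (fun i : Fin d => i = j)).symm (a, b)))
    have hrw : ∀ t : ℝ,
        g ((MeasurableEquiv.piEquivPiSubtypeProd (fun _ : Fin d => ℝ)
            (fun i : Fin d => i = j)).symm
          ((MeasurableEquiv.funUnique {i : Fin d // i = j} ℝ).symm t, b))
          = g (Function.update ((MeasurableEquiv.piEquivPiSubtypeProd (fun _ : Fin d => ℝ)
            (fun i : Fin d => i = j)).symm (fun _ => (0 : ℝ), b)) j t) := by
      intro t
      congr 1
      funext i
      by_cases hi : i = j
      · subst hi
        simp [MeasurableEquiv.piEquivPiSubtypeProd, Equiv.piEquivPiSubtypeProd,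
          MeasurableEquiv.funUnique, MeasurableEquiv.piUnique, Equiv.piUnique]
      · simp [MeasurableEquiv.piEquivPiSubtypeProd, Equiv.piEquivPiSubtypeProd,
          Function.update_of_ne hi, hi]
    have h3 : (∫ t, (fun a => g ((MeasurableEquiv.piEquivPiSubtypeProd (fun _ : Fin d => ℝ)
        (fun i : Fin d => i = j)).symm (a, b)))
          ((MeasurableEquiv.funUnique {i : Fin d // i = j} ℝ).symm t)
        ∂(volume.restrict (Set.Icc (0 : ℝ) 1))) = 0 := by
      simp_rw [hrw]
      exact h0 _
    have h4 := (h2.symm.trans h3)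
    convert h4 using 2
    congr!
  simp_rw [hinner]
  simp

lemma integral_prod_zero_left {d : ℕ} (g : (Fin d → ℝ) × (Fin d → ℝ) → ℝ)
    (hg : Integrable g ((unifCube d).prod (unifCube d))) (j : Fin d)
    (h0 : ∀ x z, ∫ t in Set.Icc (0 : ℝ) 1, g (Function.update x j t, z) = 0) :
    ∫ p, g p ∂((unifCube d).prod (unifCube d)) = 0 := by
  rw [integral_prod_symm _ hg]
  have h1 : (fun z => ∫ x, g (x, z) ∂(unifCube d)) =ᵐ[unifCube d] 0 := by
    filter_upwards [hg.prod_left_ae] with z hz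
    exact integral_pi_eq_zero _ hz j (fun x => h0 x z)
  rw [integral_congr_ae h1]
  simp

lemma integral_prod_zero_right {d : ℕ} (g : (Fin d → ℝ) × (Fin d → ℝ) → ℝ)
    (hg : Integrable g ((unifCube d).prod (unifCube d))) (j : Fin d)
    (h0 : ∀ x z, ∫ t in Set.Icc (0 : ℝ) 1, g (x, Function.update z j t) = 0) :
    ∫ p, g p ∂((unifCube d).prod (unifCube d)) = 0 := by
  rw [integral_prod _ hg]
  have h1 : (fun x => ∫ z, g (x, z) ∂(unifCube d)) =ᵐ[unifCube d] 0 := by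
    filter_upwards [hg.prod_right_ae] with x hx
    exact integral_pi_eq_zero _ hx j (fun z => h0 x z)
  rw [integral_congr_ae h1]
  simp

lemma glue_measurable {d : ℕ} (u : Finset (Fin d)) :
    Measurable (fun p : (Fin d → ℝ) × (Fin d → ℝ) => glue u p.1 p.2) := by
  classical
  refine measurable_pi_lambda _ fun j => ?_
  by_cases hj : j ∈ u <;> simp only [glue, hj, if_true, if_false]
  · exact (measurable_pi_apply j).comp measurable_fst
  · exact (measurable_pi_apply j).comp measurable_snd

lemma glue_measurePreserving {d : ℕ} (u : Finset (Fin d)) :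
    MeasurePreserving (fun p : (Fin d → ℝ) × (Fin d → ℝ) => glue u p.1 p.2)
      ((unifCube d).prod (unifCube d)) (unifCube d) := by
  classical
  refine ⟨glue_measurable u, ?_⟩
  unfold unifCube
  refine (Measure.pi_eq (μ := fun _ : Fin d => volume.restrict (Set.Icc (0 : ℝ) 1))
    fun s hs => ?_).symm
  rw [Measure.map_apply (glue_measurable u) (MeasurableSet.univ_pi hs)]
  have hpre : (fun p : (Fin d → ℝ) × (Fin d → ℝ) => glue u p.1 p.2) ⁻¹' Set.pi Set.univ s
      = (Set.pi Set.univ fun j => if j ∈ u then s j else Set.univ) ×ˢ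
        (Set.pi Set.univ fun j => if j ∈ u then Set.univ else s j) := by
    ext p
    simp only [Set.mem_preimage, Set.mem_pi, Set.mem_univ, true_implies, Set.mem_prod, glue]
    constructor
    · intro h
      constructor <;> intro j <;> by_cases hj : j ∈ u <;> simp only [hj, if_true, if_false]
      · simpa [hj] using h j
      · trivial
      · trivial
      · simpa [hj] using h j
    · rintro ⟨h1, h2⟩ j
      by_cases hj : j ∈ u <;> simp only [hj, if_true, if_false]
      · simpa [hj] using h1 j
      · simpa [hj] using h2 j
  rw [hpre, Measure.prod_prod]
  rw [Measure.pi_pi, Measure.pi_pi, ← Finset.prod_mul_distrib]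
  refine Finset.prod_congr rfl fun j _ => ?_
  by_cases hj : j ∈ u <;> simp [hj, measure_univ]

lemma glue_update_mem {d : ℕ} (u : Finset (Fin d)) {j : Fin d} (hj : j ∈ u) (x z : Fin d → ℝ)
    (t : ℝ) : glue u (Function.update x j t) z = Function.update (glue u x z) j t := by
  funext i
  rcases eq_or_ne i j with rfl | hi
  · simp [glue, hj]
  · simp [glue, Function.update_of_ne hi]

lemma glue_update_not_mem {d : ℕ} (u : Finset (Fin d)) {j : Fin d} (hj : j ∉ u) (x z : Fin d → ℝ)
    (t : ℝ) : glue u (Function.update x j t) z = glue u x z := by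
  funext i
  rcases eq_or_ne i j with rfl | hi
  · simp [glue, hj]
  · simp [glue, Function.update_of_ne hi]

lemma glue_update_right_not_mem {d : ℕ} (u : Finset (Fin d)) {j : Fin d} (hj : j ∉ u)
    (x z : Fin d → ℝ) (t : ℝ) :
    glue u x (Function.update z j t) = Function.update (glue u x z) j t := by
  funext i
  rcases eq_or_ne i j with rfl | hi
  · simp [glue, hj]
  · simp [glue, Function.update_of_ne hi]

lemma glue_update_right_mem {d : ℕ} (u : Finset (Fin d)) {j : Fin d} (hj : j ∈ u)
    (x z : Fin d → ℝ) (t : ℝ) :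
    glue u x (Function.update z j t) = glue u x z := by
  funext i
  rcases eq_or_ne i j with rfl | hi
  · simp [glue, hj]
  · simp [glue, Function.update_of_ne hi]

end SobolAux

open SobolAux

/-- Entry of the Sobol' matrix: `Θ_{uv} = E[f(y_u) f(y_v)] = μ² + τ̲²_{nxor(u,v)}`. -/
theorem sobol_matrix_entry {d : ℕ} (hd : 1 ≤ d)
    (f : (Fin d → ℝ) → ℝ) (fu : Finset (Fin d) → (Fin d → ℝ) → ℝ) (μ : ℝ)
    (hf : Measurable f) (hfL2 : MemLp f 2 (unifCube d))
    (hfu : ∀ u, Measurable (fu u)) (hfuL2 : ∀ u, MemLp (fu u) 2 (unifCube d))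
    (hμ : μ = ∫ x, f x ∂(unifCube d))
    (hdecomp : ∀ x, f x = ∑ u : Finset (Fin d), fu u x)
    (hconst : ∀ x, fu ∅ x = μ)
    (hdep : ∀ u, ∀ x y : Fin d → ℝ, (∀ j ∈ u, x j = y j) → fu u x = fu u y)
    (hzero : ∀ u : Finset (Fin d), ∀ j ∈ u, ∀ x : Fin d → ℝ,
      ∫ t in Set.Icc (0 : ℝ) 1, fu u (Function.update x j t) = 0)
    (u v : Finset (Fin d)) :
    ∫ p : (Fin d → ℝ) × (Fin d → ℝ),
        f (glue u p.1 p.2) * f (glue v p.1 p.2) ∂((unifCube d).prod (unifCube d))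
      = μ ^ 2 + ∑ w ∈ (nxor u v).powerset.filter (fun w => w ≠ ∅),
          ∫ x, (fu w x) ^ 2 ∂(unifCube d) := by
  classical
  set P := (unifCube d).prod (unifCube d) with hPdef
  have hglue2 : ∀ (a : Finset (Fin d)) (w : Finset (Fin d)),
      MemLp (fun p : (Fin d → ℝ) × (Fin d → ℝ) => fu w (glue a p.1 p.2)) 2 P :=
    fun a w => (hfuL2 w).comp_measurePreserving (glue_measurePreserving a)
  have hint : ∀ w w' : Finset (Fin d),
      Integrable (fun p : (Fin d → ℝ) × (Fin d → ℝ) =>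
        fu w (glue u p.1 p.2) * fu w' (glue v p.1 p.2)) P :=
    fun w w' => integrable_mul_L2 (hglue2 u w) (hglue2 v w')
  -- the generic vanishing lemmas
  have key_left : ∀ w w' : Finset (Fin d), ∀ j : Fin d, j ∈ w → j ∈ u →
      (∀ x z t, fu w' (glue v (Function.update x j t) z) = fu w' (glue v x z)) →
      ∫ p, fu w (glue u p.1 p.2) * fu w' (glue v p.1 p.2) ∂P = 0 := by
    intro w w' j hjw hju hc
    refine integral_prod_zero_left _ (hint w w') j ?_
    intro x z
    simp_rw [glue_update_mem u hju, hc]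
    rw [integral_mul_const, hzero w j hjw, zero_mul]
  have key_right : ∀ w w' : Finset (Fin d), ∀ j : Fin d, j ∈ w → j ∉ u →
      (∀ x z t, fu w' (glue v x (Function.update z j t)) = fu w' (glue v x z)) →
      ∫ p, fu w (glue u p.1 p.2) * fu w' (glue v p.1 p.2) ∂P = 0 := by
    intro w w' j hjw hju hc
    refine integral_prod_zero_right _ (hint w w') j ?_
    intro x z
    simp_rw [glue_update_right_not_mem u hju, hc]
    rw [integral_mul_const, hzero w j hjw, zero_mul]
  have key_left2 : ∀ w w' : Finset (Fin d), ∀ j : Fin d, j ∈ w' → j ∈ v →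
      (∀ x z t, fu w (glue u (Function.update x j t) z) = fu w (glue u x z)) →
      ∫ p, fu w (glue u p.1 p.2) * fu w' (glue v p.1 p.2) ∂P = 0 := by
    intro w w' j hjw' hjv hc
    refine integral_prod_zero_left _ (hint w w') j ?_
    intro x z
    simp_rw [glue_update_mem v hjv, hc]
    rw [integral_const_mul, hzero w' j hjw', mul_zero]
  have key_right2 : ∀ w w' : Finset (Fin d), ∀ j : Fin d, j ∈ w' → j ∉ v →
      (∀ x z t, fu w (glue u x (Function.update z j t)) = fu w (glue u x z)) →
      ∫ p, fu w (glue u p.1 p.2) * fu w' (glue v p.1 p.2) ∂P = 0 := by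
    intro w w' j hjw' hjv hc
    refine integral_prod_zero_right _ (hint w w') j ?_
    intro x z
    simp_rw [glue_update_right_not_mem v hjv, hc]
    rw [integral_const_mul, hzero w' j hjw', mul_zero]
  -- off-diagonal terms vanish
  have hoffdiag : ∀ w w' : Finset (Fin d), w ≠ w' →
      ∫ p, fu w (glue u p.1 p.2) * fu w' (glue v p.1 p.2) ∂P = 0 := by
    intro w w' hne
    by_cases hsub : w ⊆ w'
    · have hsub' : ¬ w' ⊆ w := fun h => hne (Finset.Subset.antisymm hsub h)
      obtain ⟨j, hjw', hjw⟩ := Finset.not_subset.mp hsub'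
      have hcL : ∀ x z t, fu w (glue u (Function.update x j t) z) = fu w (glue u x z) := by
        intro x z t
        refine hdep w _ _ fun i hi => ?_
        have hij : i ≠ j := fun h => hjw (h ▸ hi)
        simp [glue, Function.update_of_ne hij]
      have hcR : ∀ x z t, fu w (glue u x (Function.update z j t)) = fu w (glue u x z) := by
        intro x z t
        refine hdep w _ _ fun i hi => ?_
        have hij : i ≠ j := fun h => hjw (h ▸ hi)
        simp [glue, Function.update_of_ne hij]
      by_cases hjv : j ∈ v
      · exact key_left2 w w' j hjw' hjv hcL
      · exact key_right2 w w' j hjw' hjv hcR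
    · obtain ⟨j, hjw, hjw'⟩ := Finset.not_subset.mp hsub
      have hcL : ∀ x z t, fu w' (glue v (Function.update x j t) z) = fu w' (glue v x z) := by
        intro x z t
        refine hdep w' _ _ fun i hi => ?_
        have hij : i ≠ j := fun h => hjw' (h ▸ hi)
        simp [glue, Function.update_of_ne hij]
      have hcR : ∀ x z t, fu w' (glue v x (Function.update z j t)) = fu w' (glue v x z) := by
        intro x z t
        refine hdep w' _ _ fun i hi => ?_
        have hij : i ≠ j := fun h => hjw' (h ▸ hi)
        simp [glue, Function.update_of_ne hij]
      by_cases hju : j ∈ u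
      · exact key_left w w' j hjw hju hcL
      · exact key_right w w' j hjw hju hcR
  -- diagonal terms outside the powerset of `nxor u v` vanish
  have hdiag_not : ∀ w : Finset (Fin d), ¬ w ⊆ nxor u v →
      ∫ p, fu w (glue u p.1 p.2) * fu w (glue v p.1 p.2) ∂P = 0 := by
    intro w h
    obtain ⟨j, hjw, hjn⟩ := Finset.not_subset.mp h
    have hjn' : ¬ (j ∈ u ∧ j ∈ v) ∧ ¬ (j ∉ u ∧ j ∉ v) := by
      simpa [nxor, Finset.mem_union, Finset.mem_inter, Finset.mem_compl, not_or] using hjn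
    by_cases hju : j ∈ u
    · have hjv : j ∉ v := fun h' => hjn'.1 ⟨hju, h'⟩
      refine key_left w w j hjw hju ?_
      intro x z t
      rw [glue_update_not_mem v hjv]
    · have hjv : j ∈ v := by
        by_contra h'
        exact hjn'.2 ⟨hju, h'⟩
      refine key_right w w j hjw hju ?_
      intro x z t
      rw [glue_update_right_mem v hjv]
  -- diagonal terms inside the powerset equal the squared norm
  have hdiag_sub : ∀ w : Finset (Fin d), w ⊆ nxor u v →
      ∫ p, fu w (glue u p.1 p.2) * fu w (glue v p.1 p.2) ∂P
        = ∫ x, fu w x ^ 2 ∂(unifCube d) := by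
    intro w hsub
    have heq : ∀ x z : Fin d → ℝ, fu w (glue v x z) = fu w (glue u x z) := by
      intro x z
      refine hdep w _ _ fun i hi => ?_
      have hmem := hsub hi
      simp only [nxor, Finset.mem_union, Finset.mem_inter, Finset.mem_compl] at hmem
      rcases hmem with ⟨h1, h2⟩ | ⟨h1, h2⟩ <;> simp [glue, h1, h2]
    simp_rw [heq]
    have hmap := (glue_measurePreserving u).map_eq
    rw [show (∫ x, fu w x ^ 2 ∂(unifCube d))
        = ∫ p, fu w (glue u p.1 p.2) ^ 2 ∂P from by
      conv_lhs => rw [← hmap]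
      rw [integral_map (glue_measurable u).aemeasurable
        (by rw [hmap]; exact ((hfu w).pow_const 2).aestronglyMeasurable)]]
    simp_rw [pow_two]
  -- expand the integrand
  simp_rw [hdecomp, Finset.sum_mul_sum]
  rw [integral_finset_sum _ (fun w _ => integrable_finset_sum _ (fun w' _ => hint w w'))]
  rw [Finset.sum_congr rfl
    (fun w _ => integral_finset_sum _ (fun w' (_ : w' ∈ Finset.univ) => hint w w'))]
  rw [Finset.sum_congr rfl (fun w _ =>
    Finset.sum_eq_single_of_mem w (Finset.mem_univ w)
      (fun w' _ hne => hoffdiag w w' (Ne.symm hne)))]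
  rw [← Finset.sum_subset (Finset.subset_univ (nxor u v).powerset)
    (fun w _ hw => hdiag_not w (fun h => hw (Finset.mem_powerset.mpr h)))]
  rw [Finset.sum_congr rfl (fun w hw => hdiag_sub w (Finset.mem_powerset.mp hw))]
  rw [← Finset.add_sum_erase _ _ (Finset.empty_mem_powerset (nxor u v))]
  congr 1
  · simp_rw [hconst]
    simp [integral_const]
  · rw [Finset.filter_ne']
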